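/- Let p, q : ℕ, let A be a real p × q matrix, b : Fin p → ℝ, and let W = { x : Fin q → ℝ | A.mulVec x = b }. Let T ⊆ W be a nonempty bounded set. Then there exist k ≤ q, a real q × k matrix N, a vector o : Fin q → ℝ, and bounds l, g : Fin k → ℝ such that (i) for every u : Fin k → ℝ, N.mulVec u + o ∈ W, and (ii) T ⊆ (fun u => N.mulVec u + o) '' { u | ∀ i, l i ≤ u i ∧ u i ≤ g i }. (Real-valued part of Lemma 3: the Lola_𝔹/𝓛𝓐 pruning strategy is sound and constant: a bounded set of admissible real value combinations satisfying linear equations admits a constant-size sound over-approximation, namely the image under an affine map of a box of fresh variables, which still satisfies all the linear equations.) -/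

import Mathlib

/-- Real-valued part of Lemma 3 (the `Lola_𝔹/𝓛𝓐` pruning strategy is sound and
constant): a nonempty bounded set `T` of admissible real value combinations contained
in the solution set `W` of a linear system admits a sound over-approximation given by
the image under an affine map (into `W`) of a box of at most `q` fresh variables. -/
theorem lolaBLA_pruning_sound_constant (p q : ℕ)
    (A : Matrix (Fin p) (Fin q) ℝ) (b : Fin p → ℝ)
    (T : Set (Fin q → ℝ)) (hT : T.Nonempty)
    (hTW : T ⊆ { x : Fin q → ℝ | A.mulVec x = b })
    (hbdd : Bornology.IsBounded T) :
    ∃ k ≤ q, ∃ N : Matrix (Fin q) (Fin k) ℝ, ∃ o : Fin q → ℝ, ∃ l g : Fin k → ℝ,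
      (∀ u : Fin k → ℝ, N.mulVec u + o ∈ { x : Fin q → ℝ | A.mulVec x = b }) ∧
      T ⊆ (fun u : Fin k → ℝ => N.mulVec u + o) ''
            { u : Fin k → ℝ | ∀ i, l i ≤ u i ∧ u i ≤ g i } := by
  obtain ⟨o, hoT⟩ := hT
  have hob : A.mulVec o = b := hTW hoT
  set K : Submodule ℝ (Fin q → ℝ) := LinearMap.ker A.mulVecLin with hK
  obtain ⟨K', hK'⟩ := Submodule.exists_isCompl K
  set P : (Fin q → ℝ) →ₗ[ℝ] (Fin q → ℝ) :=
    K.subtype.comp (K.linearProjOfIsCompl K' hK') with hP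
  have hPmem : ∀ x, P x ∈ K := fun x => (K.linearProjOfIsCompl K' hK' x).2
  have hPid : ∀ x, x ∈ K → P x = x := by
    intro x hx
    simp [hP, Submodule.linearProjOfIsCompl_apply_left hK' ⟨x, hx⟩]
    exact congrArg Subtype.val (Submodule.linearProjOfIsCompl_apply_left hK' ⟨x, hx⟩)
  obtain ⟨R, hR⟩ := Metric.isBounded_iff.mp hbdd
  refine ⟨q, le_refl q, LinearMap.toMatrix' P, o, (fun _ => -R), (fun _ => R), ?_, ?_⟩
  · intro u
    have hmv : (LinearMap.toMatrix' P).mulVec u = P u := by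
      rw [← Matrix.toLin'_apply, Matrix.toLin'_toMatrix']
    have h0 : A.mulVec (P u) = 0 := hPmem u
    simp only [Set.mem_setOf_eq, hmv, Matrix.mulVec_add, h0, hob, zero_add]
  · intro x hxT
    have hxb : A.mulVec x = b := hTW hxT
    have hxK : x - o ∈ K := by
      simp [hK, LinearMap.mem_ker, Matrix.mulVecLin_apply, Matrix.mulVec_sub, hxb, hob]
    refine ⟨x - o, ?_, ?_⟩
    · intro i
      have hd : dist (x i) (o i) ≤ R := le_trans (dist_le_pi_dist x o i) (hR hxT hoT)
      have : |x i - o i| ≤ R := by rwa [Real.dist_eq] at hd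
      obtain ⟨h1, h2⟩ := abs_le.mp this
      constructor <;> simp [Pi.sub_apply] <;> linarith
    · have hmv : (LinearMap.toMatrix' P).mulVec (x - o) = P (x - o) := by
        rw [← Matrix.toLin'_apply, Matrix.toLin'_toMatrix']
      simp [hmv, hPid _ hxK]
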